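/- Let A be a finite idempotent algebra, a,b ∈ A, and φ an automorphism of A with φ(a) = b and φ(b) = a. Let ∗ be a binary term operation of A, and suppose there is a binary term operation f of A such that the element c = f(a,b) satisfies c∗a = a∗c = a and c∗b = b∗c = b. Then A has a ternary term operation g which is a majority operation on {a,b}: g(a,a,b) = g(a,b,a) = g(b,a,a) = a and g(b,b,a) = g(b,a,b) = g(a,b,b) = b. -/
import Mathlib


namespace UA

/-- Terms over a signature `(ι, ar)` with `n` variables. -/
inductive Term (ι : Type) (ar : ι → ℕ) (n : ℕ) : Type where
  | var : Fin n → Term ι ar n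
  | app : (i : ι) → (Fin (ar i) → Term ι ar n) → Term ι ar n

/-- Evaluation of a term in an algebra with operations `ops`. -/
def Term.eval {ι : Type} {ar : ι → ℕ} {A : Type} (ops : ∀ i : ι, (Fin (ar i) → A) → A)
    {n : ℕ} : Term ι ar n → (Fin n → A) → A
  | .var j, x => x j
  | .app i ts, x => ops i fun k => Term.eval ops (ts k) x

variable {ι : Type} {ar : ι → ℕ} {A : Type}

/-- An algebra is idempotent if every basic operation is. -/
def Idempotent (ops : ∀ i : ι, (Fin (ar i) → A) → A) : Prop :=
  ∀ (i : ι) (x : A), ops i (fun _ => x) = x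

/-- A subuniverse: a subset closed under all basic operations. -/
def IsSubuniverse (ops : ∀ i : ι, (Fin (ar i) → A) → A) (S : Set A) : Prop :=
  ∀ (i : ι) (xs : Fin (ar i) → A), (∀ k, xs k ∈ S) → ops i xs ∈ S

/-- The subuniverse generated by `X`. -/
def Sg (ops : ∀ i : ι, (Fin (ar i) → A) → A) (X : Set A) : Set A :=
  ⋂₀ {S | IsSubuniverse ops S ∧ X ⊆ S}

/-- A tolerance: a reflexive symmetric compatible binary relation. -/
def IsTolerance (ops : ∀ i : ι, (Fin (ar i) → A) → A) (τ : A → A → Prop) : Prop :=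
  (∀ x, τ x x) ∧ (∀ x y, τ x y → τ y x) ∧
  ∀ (i : ι) (xs ys : Fin (ar i) → A), (∀ k, τ (xs k) (ys k)) → τ (ops i xs) (ops i ys)

/-- A congruence: a compatible equivalence relation. -/
def IsCongruence (ops : ∀ i : ι, (Fin (ar i) → A) → A) (θ : A → A → Prop) : Prop :=
  Equivalence θ ∧
  ∀ (i : ι) (xs ys : Fin (ar i) → A), (∀ k, θ (xs k) (ys k)) → θ (ops i xs) (ops i ys)

/-- A congruence of the subalgebra with universe `B`, viewed as a partial
equivalence relation on the big algebra whose domain is exactly `B` and which is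
compatible with all operations. -/
def IsCongruenceOn (ops : ∀ i : ι, (Fin (ar i) → A) → A) (B : Set A)
    (θ : A → A → Prop) : Prop :=
  (∀ x y, θ x y → x ∈ B ∧ y ∈ B) ∧
  (∀ x ∈ B, θ x x) ∧
  (∀ x y, θ x y → θ y x) ∧
  (∀ x y z, θ x y → θ y z → θ x z) ∧
  ∀ (i : ι) (xs ys : Fin (ar i) → A), (∀ k, θ (xs k) (ys k)) → θ (ops i xs) (ops i ys)

/-- `f` is a binary term operation of the algebra. -/
def IsTermOp2 (ops : ∀ i : ι, (Fin (ar i) → A) → A) (f : A → A → A) : Prop :=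
  ∃ t : Term ι ar 2, ∀ x y, f x y = t.eval ops ![x, y]

/-- `g` is a ternary term operation of the algebra. -/
def IsTermOp3 (ops : ∀ i : ι, (Fin (ar i) → A) → A) (g : A → A → A → A) : Prop :=
  ∃ t : Term ι ar 3, ∀ x y z, g x y z = t.eval ops ![x, y, z]

/-- Connectivity of `a` and `b` in the hypergraph `H(A)` whose hyperedges are the
nonempty proper subuniverses: a chain of hyperedges with consecutive ones
intersecting, the first containing `a`, the last containing `b`. -/
def HConnected (ops : ∀ i : ι, (Fin (ar i) → A) → A) (a b : A) : Prop :=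
  ∃ L : List (Set A),
    (∀ S ∈ L, IsSubuniverse ops S ∧ S.Nonempty ∧ S ≠ Set.univ) ∧
    L.Chain' (fun S T => (S ∩ T).Nonempty) ∧
    ∃ h : L ≠ [], a ∈ L.head h ∧ b ∈ L.getLast h


/-- Substitution of terms into a term. -/
def Term.subst {ι : Type} {ar : ι → ℕ} {n m : ℕ} :
    Term ι ar n → (Fin n → Term ι ar m) → Term ι ar m
  | .var j, σ => σ j
  | .app i ts, σ => .app i (fun k => (ts k).subst σ)

lemma Term.eval_subst {ι : Type} {ar : ι → ℕ} {A : Type}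
    (ops : ∀ i : ι, (Fin (ar i) → A) → A) {n m : ℕ}
    (t : Term ι ar n) (σ : Fin n → Term ι ar m) (x : Fin m → A) :
    (t.subst σ).eval ops x = t.eval ops (fun j => (σ j).eval ops x) := by
  induction t with
  | var j => rfl
  | app i ts ih =>
    simp only [Term.subst, Term.eval]
    congr 1
    funext k
    exact ih k

lemma Term.eval_const {ι : Type} {ar : ι → ℕ} {A : Type}
    (ops : ∀ i : ι, (Fin (ar i) → A) → A) (hidem : Idempotent ops) {n : ℕ}
    (t : Term ι ar n) (c : A) : t.eval ops (fun _ => c) = c := by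
  induction t with
  | var j => rfl
  | app i ts ih =>
    simp only [Term.eval]
    have : (fun k => Term.eval ops (ts k) fun _ => c) = fun _ => c := by
      funext k; exact ih k
    rw [this]; exact hidem i c

lemma Term.eval_aut {ι : Type} {ar : ι → ℕ} {A : Type}
    (ops : ∀ i : ι, (Fin (ar i) → A) → A) (φ : A ≃ A)
    (hφop : ∀ (i : ι) (xs : Fin (ar i) → A), φ (ops i xs) = ops i (fun k => φ (xs k)))
    {n : ℕ} (t : Term ι ar n) (x : Fin n → A) :
    φ (t.eval ops x) = t.eval ops (fun j => φ (x j)) := by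
  induction t with
  | var j => rfl
  | app i ts ih =>
    simp only [Term.eval]
    rw [hφop]
    congr 1
    funext k
    exact ih k

/-- if an automorphism swaps `a` and `b` and `c = f(a,b)` lies
below both `a` and `b` with respect to a binary term operation `∗`, then the
algebra has a term operation that is majority on `{a, b}`. -/
theorem stmt_19 {ι : Type} {ar : ι → ℕ} {A : Type} [Fintype A] [Nonempty A]
    (ops : ∀ i : ι, (Fin (ar i) → A) → A)
    (hidem : Idempotent ops)
    (a b : A)
    (φ : A ≃ A)
    (hφop : ∀ (i : ι) (xs : Fin (ar i) → A), φ (ops i xs) = ops i (fun k => φ (xs k)))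
    (hφa : φ a = b) (hφb : φ b = a)
    (star : A → A → A) (hstar : IsTermOp2 ops star)
    (f : A → A → A) (hf : IsTermOp2 ops f)
    (hca : star (f a b) a = a) (hac : star a (f a b) = a)
    (hcb : star (f a b) b = b) (hbc : star b (f a b) = b) :
    ∃ g : A → A → A → A, IsTermOp3 ops g ∧
      g a a b = a ∧ g a b a = a ∧ g b a a = a ∧
      g b b a = b ∧ g b a b = b ∧ g a b b = b := by
  obtain ⟨ts, hts⟩ := hstar
  obtain ⟨tf, htf⟩ := hf
  -- pairs as functions
  have pair_eq : ∀ x y : A, (fun j => φ ((![x, y] : Fin 2 → A) j)) = ![φ x, φ y] := by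
    intro x y; funext j; fin_cases j <;> simp
  have hφstar : ∀ x y, φ (star x y) = star (φ x) (φ y) := by
    intro x y
    rw [hts, Term.eval_aut ops φ hφop, pair_eq, ← hts]
  have hφf : ∀ x y, φ (f x y) = f (φ x) (φ y) := by
    intro x y
    rw [htf, Term.eval_aut ops φ hφop, pair_eq, ← htf]
  have const_pair : ∀ x : A, (![x, x] : Fin 2 → A) = fun _ => x := by
    intro x; funext j; fin_cases j <;> rfl
  have hstaridem : ∀ x, star x x = x := by
    intro x; rw [hts, const_pair, Term.eval_const ops hidem]
  have hfidem : ∀ x, f x x = x := by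
    intro x; rw [htf, const_pair, Term.eval_const ops hidem]
  set c := f a b with hc
  set d := f b a with hd
  have hφc : φ c = d := by rw [hc, hφf, hφa, hφb, hd]
  have hda : star d a = a := by
    have := hφstar c b; rw [hcb, hφc, hφb] at this; exact this.symm
  have had : star a d = a := by
    have := hφstar b c; rw [hbc, hφc, hφb] at this; exact this.symm
  have hdb : star d b = b := by
    have := hφstar c a; rw [hca, hφc, hφa] at this; exact this.symm
  have hbd : star b d = b := by
    have := hφstar a c; rw [hac, hφc, hφa] at this; exact this.symm
  refine ⟨fun x y z => star (f x y) (star (f x z) (f y z)), ?_, ?_, ?_, ?_, ?_, ?_, ?_⟩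
  · -- term operation
    refine ⟨(ts.subst ![tf.subst ![.var 0, .var 1],
        ts.subst ![tf.subst ![.var 0, .var 2], tf.subst ![.var 1, .var 2]]]), ?_⟩
    intro x y z
    show star (f x y) (star (f x z) (f y z)) = _
    rw [Term.eval_subst, hts]
    congr 1
    funext j
    fin_cases j
    · show f x y = Term.eval ops (tf.subst ![.var 0, .var 1]) ![x, y, z]
      rw [Term.eval_subst, htf]
      congr 1; funext k; fin_cases k <;> rfl
    · show star (f x z) (f y z) = Term.eval ops
        (ts.subst ![tf.subst ![.var 0, .var 2], tf.subst ![.var 1, .var 2]]) ![x, y, z]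
      rw [Term.eval_subst, hts]
      congr 1; funext k
      fin_cases k
      · show f x z = Term.eval ops (tf.subst ![.var 0, .var 2]) ![x, y, z]
        rw [Term.eval_subst, htf]
        congr 1; funext m; fin_cases m <;> rfl
      · show f y z = Term.eval ops (tf.subst ![.var 1, .var 2]) ![x, y, z]
        rw [Term.eval_subst, htf]
        congr 1; funext m; fin_cases m <;> rfl
  · show star (f a a) (star (f a b) (f a b)) = a
    rw [hfidem, ← hc, hstaridem, hac]
  · show star (f a b) (star (f a a) (f b a)) = a
    rw [hfidem, ← hc, ← hd, had, hca]
  · show star (f b a) (star (f b a) (f a a)) = a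
    rw [hfidem, ← hd, hda, hda]
  · show star (f b b) (star (f b a) (f b a)) = b
    rw [hfidem, ← hd, hstaridem, hbd]
  · show star (f b a) (star (f b b) (f a b)) = b
    rw [hfidem, ← hd, ← hc, hbc, hdb]
  · show star (f a b) (star (f a b) (f b b)) = b
    rw [hfidem, ← hc, hcb, hcb]

end UA
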